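/- Let n ≥ 1 and define p_i* = ((i−1)√2 + 1) / ((n−1)√2 + 2) for i ∈ {1,…,n}. Then (p_1*,…,p_n*) is a global minimizer of F_n on the ordered feasible region: 0 ≤ p_1* ≤ ⋯ ≤ p_n* ≤ 1, and for every (q_1,…,q_n) with 0 ≤ q_1 ≤ q_2 ≤ ⋯ ≤ q_n ≤ 1 one has ∫₀¹ ∫₀¹ min_{1 ≤ i ≤ n} (|x − p_i*| + |y − p_i*|) dy dx ≤ ∫₀¹ ∫₀¹ min_{1 ≤ i ≤ n} (|x − q_i| + |y − q_i|) dy dx. -/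

import Mathlib

open Finset MeasureTheory intervalIntegral

private lemma hub_aux (x y p : ℝ) (hxy : x ≤ y) :
    |x - p| + |y - p| = (y - x) + 2 * (max (x - p) 0 + max (p - y) 0) := by
  rcases le_total p x with h1 | h1
  · rw [abs_of_nonneg (by linarith), abs_of_nonneg (by linarith),
      max_eq_left (by linarith), max_eq_right (by linarith)]
    ring
  · rcases le_total p y with h2 | h2
    · rw [abs_of_nonpos (by linarith), abs_of_nonneg (by linarith),
        max_eq_right (by linarith), max_eq_right (by linarith)]
      ring
    · rw [abs_of_nonpos (by linarith), abs_of_nonpos (by linarith),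
        max_eq_right (by linarith), max_eq_left (by linarith)]
      ring

lemma hub_abs_decomp (x y p : ℝ) :
    |x - p| + |y - p|
      = |x - y| + 2 * (max (min x y - p) 0 + max (p - max x y) 0) := by
  rcases le_total x y with h | h
  · rw [min_eq_left h, max_eq_right h, abs_of_nonpos (by linarith : x - y ≤ 0),
      hub_aux x y p h]
    ring
  · have h2 := hub_aux y x p h
    rw [min_eq_right h, max_eq_left h, abs_of_nonneg (by linarith : 0 ≤ x - y)]
    linarith [h2]

/-- The distance from the point set `{p 1, …, p n}` to the interval `[a,b]`,
written as a sum of elementary terms (at most one of which is nonzero). -/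
lemma hub_core (n : ℕ) (hn : 1 ≤ n) (p : ℕ → ℝ)
    (hm : ∀ i j, 1 ≤ i → i ≤ j → j ≤ n → p i ≤ p j)
    (H : (Finset.Icc 1 n).Nonempty) (a b : ℝ) (hab : a ≤ b) :
    (Finset.Icc 1 n).inf' H (fun i => max (a - p i) 0 + max (p i - b) 0)
      = max (p 1 - b) 0 + max (a - p n) 0
        + ∑ k ∈ Finset.Icc 1 (n - 1),
            min (max (a - p k) 0) (max (p (k + 1) - b) 0) := by
  have h1n : 1 ∈ Finset.Icc 1 n := by simp [Finset.mem_Icc]; omega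
  have hnn : n ∈ Finset.Icc 1 n := by simp [Finset.mem_Icc]; omega
  have hk1 : ∀ k, k ∈ Finset.Icc 1 (n - 1) → 1 ≤ k ∧ k + 1 ≤ n := by
    intro k hk; rw [Finset.mem_Icc] at hk; omega
  by_cases hb1 : b < p 1
  · -- the interval lies strictly to the left of all hubs
    have hsum : ∑ k ∈ Finset.Icc 1 (n - 1),
        min (max (a - p k) 0) (max (p (k + 1) - b) 0) = 0 := by
      apply Finset.sum_eq_zero
      intro k hk
      obtain ⟨hk1', hk2⟩ := hk1 k hk
      have : p 1 ≤ p k := hm 1 k le_rfl hk1' (by omega)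
      rw [max_eq_right (by linarith : a - p k ≤ 0)]
      exact min_eq_left (le_max_right _ 0)
    have h1 : p 1 ≤ p n := hm 1 n le_rfl hn le_rfl
    rw [hsum, max_eq_left (by linarith : 0 ≤ p 1 - b),
      max_eq_right (by linarith : a - p n ≤ 0)]
    apply le_antisymm
    · have h2 : (Finset.Icc 1 n).inf' H (fun i => max (a - p i) 0 + max (p i - b) 0)
          ≤ max (a - p 1) 0 + max (p 1 - b) 0 := Finset.inf'_le _ h1n
      rw [max_eq_right (by linarith : a - p 1 ≤ 0),
        max_eq_left (by linarith : 0 ≤ p 1 - b)] at h2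
      linarith
    · apply Finset.le_inf'
      intro i hi
      rw [Finset.mem_Icc] at hi
      have h3 : p 1 ≤ p i := hm 1 i le_rfl hi.1 hi.2
      have h4 := le_max_left (p i - b) 0
      have h5 := le_max_right (a - p i) 0
      linarith
  by_cases hna : p n < a
  · -- the interval lies strictly to the right of all hubs
    have hsum : ∑ k ∈ Finset.Icc 1 (n - 1),
        min (max (a - p k) 0) (max (p (k + 1) - b) 0) = 0 := by
      apply Finset.sum_eq_zero
      intro k hk
      obtain ⟨hk1', hk2⟩ := hk1 k hk
      have : p (k + 1) ≤ p n := hm (k + 1) n (by omega) hk2 le_rfl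
      rw [max_eq_right (by linarith : p (k + 1) - b ≤ 0)]
      exact min_eq_right (le_max_right _ 0)
    have h1 : p 1 ≤ p n := hm 1 n le_rfl hn le_rfl
    rw [hsum, max_eq_right (by linarith : p 1 - b ≤ 0),
      max_eq_left (by linarith : 0 ≤ a - p n)]
    apply le_antisymm
    · have h2 : (Finset.Icc 1 n).inf' H (fun i => max (a - p i) 0 + max (p i - b) 0)
          ≤ max (a - p n) 0 + max (p n - b) 0 := Finset.inf'_le _ hnn
      rw [max_eq_left (by linarith : 0 ≤ a - p n),
        max_eq_right (by linarith : p n - b ≤ 0)] at h2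
      linarith
    · apply Finset.le_inf'
      intro i hi
      rw [Finset.mem_Icc] at hi
      have h3 : p i ≤ p n := hm i n hi.1 hi.2 le_rfl
      have h4 := le_max_left (a - p i) 0
      have h5 := le_max_right (p i - b) 0
      linarith
  by_cases hmem : ∃ m, 1 ≤ m ∧ m ≤ n ∧ a ≤ p m ∧ p m ≤ b
  · -- some hub lies inside the interval: everything is zero
    obtain ⟨m, hm1, hmn, ham, hmb⟩ := hmem
    have hsum : ∑ k ∈ Finset.Icc 1 (n - 1),
        min (max (a - p k) 0) (max (p (k + 1) - b) 0) = 0 := by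
      apply Finset.sum_eq_zero
      intro k hk
      obtain ⟨hk1', hk2⟩ := hk1 k hk
      rcases le_or_gt (k + 1) m with h | h
      · have : p (k + 1) ≤ p m := hm (k + 1) m (by omega) h hmn
        rw [max_eq_right (by linarith : p (k + 1) - b ≤ 0)]
        exact min_eq_right (le_max_right _ 0)
      · have : p m ≤ p k := hm m k hm1 (by omega) (by omega)
        rw [max_eq_right (by linarith : a - p k ≤ 0)]
        exact min_eq_left (le_max_right _ 0)
    have hp1 : p 1 ≤ p m := hm 1 m le_rfl hm1 hmn
    have hpn : p m ≤ p n := hm m n hm1 hmn le_rfl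
    rw [hsum, max_eq_right (by linarith : p 1 - b ≤ 0),
      max_eq_right (by linarith : a - p n ≤ 0)]
    apply le_antisymm
    · have h2 : (Finset.Icc 1 n).inf' H (fun i => max (a - p i) 0 + max (p i - b) 0)
          ≤ max (a - p m) 0 + max (p m - b) 0 :=
        Finset.inf'_le _ (show m ∈ Finset.Icc 1 n by simp [Finset.mem_Icc]; omega)
      rw [max_eq_right (by linarith : a - p m ≤ 0),
        max_eq_right (by linarith : p m - b ≤ 0)] at h2
      linarith
    · apply Finset.le_inf'
      intro i _
      have h4 := le_max_right (a - p i) 0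
      have h5 := le_max_right (p i - b) 0
      linarith
  · -- the interval lies strictly inside a gap
    push_neg at hb1 hna hmem
    have hp1a : p 1 < a := by
      rcases lt_or_ge (p 1) a with h | h
      · exact h
      · exact absurd hb1 (not_le.mpr (hmem 1 le_rfl hn h))
    -- k := largest index with p k < a
    set K := (Finset.Icc 1 n).filter (fun i => p i < a) with hK
    have hKne : K.Nonempty := ⟨1, by simp [hK, Finset.mem_Icc]; exact ⟨hn, hp1a⟩⟩
    set k := K.max' hKne with hkdef
    have hkK : k ∈ K := K.max'_mem hKne
    have hk_mem : k ∈ Finset.Icc 1 n := Finset.mem_of_mem_filter _ hkK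
    have hpk : p k < a := by
      have := Finset.mem_filter.mp hkK
      simpa using this.2
    have hk_bd : 1 ≤ k ∧ k ≤ n := Finset.mem_Icc.mp hk_mem
    have hkn : k ≠ n := by
      intro h; rw [h] at hpk; linarith
    have hksn : k + 1 ≤ n := by omega
    have hpk1 : a ≤ p (k + 1) := by
      by_contra h
      push_neg at h
      have : k + 1 ∈ K := by
        simp only [hK, Finset.mem_filter, Finset.mem_Icc]
        exact ⟨⟨by omega, hksn⟩, h⟩
      have := K.le_max' _ this
      omega
    have hbk1 : b < p (k + 1) := hmem (k + 1) (by omega) hksn hpk1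
    have hkIcc : k ∈ Finset.Icc 1 (n - 1) := by
      rw [Finset.mem_Icc]; omega
    have hsum : ∑ j ∈ Finset.Icc 1 (n - 1),
        min (max (a - p j) 0) (max (p (j + 1) - b) 0)
        = min (a - p k) (p (k + 1) - b) := by
      rw [Finset.sum_eq_single_of_mem k hkIcc]
      · rw [max_eq_left (by linarith : 0 ≤ a - p k),
          max_eq_left (by linarith : 0 ≤ p (k + 1) - b)]
      · intro j hj hjk
        obtain ⟨hj1, hj2⟩ := hk1 j hj
        rcases lt_or_gt_of_ne hjk with h | h
        · have : p (j + 1) ≤ p k := hm (j + 1) k (by omega) (by omega) (by omega)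
          rw [max_eq_right (by linarith : p (j + 1) - b ≤ 0)]
          exact min_eq_right (le_max_right _ 0)
        · have : p (k + 1) ≤ p j := hm (k + 1) j (by omega) (by omega) (by omega)
          rw [max_eq_right (by linarith : a - p j ≤ 0)]
          exact min_eq_left (le_max_right _ 0)
    rw [hsum, max_eq_right (by linarith : p 1 - b ≤ 0)]
    have hpn' : p (k + 1) ≤ p n := hm (k + 1) n (by omega) hksn le_rfl
    rw [max_eq_right (by linarith : a - p n ≤ 0)]
    apply le_antisymm
    · rcases le_total (a - p k) (p (k + 1) - b) with h | h
      · have h2 : (Finset.Icc 1 n).inf' H (fun i => max (a - p i) 0 + max (p i - b) 0)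
            ≤ max (a - p k) 0 + max (p k - b) 0 := Finset.inf'_le _ hk_mem
        rw [max_eq_left (by linarith : 0 ≤ a - p k),
          max_eq_right (by linarith : p k - b ≤ 0)] at h2
        rw [min_eq_left h]
        linarith
      · have h2 : (Finset.Icc 1 n).inf' H (fun i => max (a - p i) 0 + max (p i - b) 0)
            ≤ max (a - p (k + 1)) 0 + max (p (k + 1) - b) 0 :=
          Finset.inf'_le _ (show k + 1 ∈ Finset.Icc 1 n by rw [Finset.mem_Icc]; omega)
        rw [max_eq_right (by linarith : a - p (k + 1) ≤ 0),
          max_eq_left (by linarith : 0 ≤ p (k + 1) - b)] at h2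
        rw [min_eq_right h]
        linarith
    · apply Finset.le_inf'
      intro i hi
      rw [Finset.mem_Icc] at hi
      rcases le_or_gt i k with h | h
      · have h3 : p i ≤ p k := hm i k hi.1 h hk_bd.2
        have h4 := le_max_left (a - p i) 0
        have h5 := le_max_right (p i - b) 0
        have h6 := min_le_left (a - p k) (p (k + 1) - b)
        linarith
      · have h3 : p (k + 1) ≤ p i := hm (k + 1) i (by omega) h hi.2
        have h4 := le_max_left (p i - b) 0
        have h5 := le_max_right (a - p i) 0
        have h6 := min_le_right (a - p k) (p (k + 1) - b)
        linarith

/-- Pointwise decomposition of the hub objective integrand. -/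
lemma hub_point (n : ℕ) (hn : 1 ≤ n) (p : ℕ → ℝ)
    (hm : ∀ i j, 1 ≤ i → i ≤ j → j ≤ n → p i ≤ p j)
    (H : (Finset.Icc 1 n).Nonempty) (x y : ℝ) :
    (Finset.Icc 1 n).inf' H (fun i => |x - p i| + |y - p i|)
      = |x - y| + 2 * (max (p 1 - max x y) 0 + max (min x y - p n) 0
        + ∑ k ∈ Finset.Icc 1 (n - 1),
            min (max (min x y - p k) 0) (max (p (k + 1) - max x y) 0)) := by
  have hcongr : (Finset.Icc 1 n).inf' H (fun i => |x - p i| + |y - p i|)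
      = (Finset.Icc 1 n).inf' H
        ((fun t => |x - y| + 2 * t) ∘
          (fun i => max (min x y - p i) 0 + max (p i - max x y) 0)) := by
    apply Finset.inf'_congr H rfl
    intro i _
    exact hub_abs_decomp x y (p i)
  rw [hcongr, ← Finset.apply_inf'_eq_inf'_comp H (fun t => |x - y| + 2 * t)
      (by intro s t
          rcases le_total s t with h | h
          · rw [min_eq_left h, min_eq_left (by linarith : |x - y| + 2 * s ≤ |x - y| + 2 * t)]
          · rw [min_eq_right h, min_eq_right (by linarith : |x - y| + 2 * t ≤ |x - y| + 2 * s)]),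
    hub_core n hn p hm H (min x y) (max x y) (min_le_max)]

/-- Integral of a quadratic polynomial. -/
lemma hub_int_poly (a b c d e : ℝ) :
    ∫ x in a..b, (c + d * x + e * x ^ 2)
      = (c * b + d * b ^ 2 / 2 + e * b ^ 3 / 3)
        - (c * a + d * a ^ 2 / 2 + e * a ^ 3 / 3) := by
  have hd : ∀ x : ℝ, HasDerivAt (fun t : ℝ => c * t + d / 2 * t ^ 2 + e / 3 * t ^ 3)
      (c + d * x + e * x ^ 2) x := by
    intro x
    have h1 : HasDerivAt (fun t : ℝ => c * t) c x := by
      simpa using (hasDerivAt_id x).const_mul c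
    have h2 : HasDerivAt (fun t : ℝ => d / 2 * t ^ 2) (d * x) x := by
      have := (hasDerivAt_pow 2 x).const_mul (d / 2)
      refine this.congr_deriv ?_
      push_cast; ring
    have h3 : HasDerivAt (fun t : ℝ => e / 3 * t ^ 3) (e * x ^ 2) x := by
      have := (hasDerivAt_pow 3 x).const_mul (e / 3)
      refine this.congr_deriv ?_
      push_cast; ring
    exact (h1.add h2).add h3
  rw [intervalIntegral.integral_eq_sub_of_hasDerivAt (fun x _ => hd x)
      ((by fun_prop : Continuous fun x : ℝ => c + d * x + e * x ^ 2).intervalIntegrable a b)]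
  ring

lemma hub_A_inner (x : ℝ) (hx0 : 0 ≤ x) (hx1 : x ≤ 1) :
    ∫ y in (0:ℝ)..1, |x - y| = x ^ 2 - x + 1 / 2 := by
  have h1 : IntervalIntegrable (fun y : ℝ => |x - y|) volume 0 x :=
    (by fun_prop : Continuous fun y : ℝ => |x - y|).intervalIntegrable _ _
  have h2 : IntervalIntegrable (fun y : ℝ => |x - y|) volume x 1 :=
    (by fun_prop : Continuous fun y : ℝ => |x - y|).intervalIntegrable _ _
  rw [← intervalIntegral.integral_add_adjacent_intervals h1 h2]
  have e1 : ∫ y in (0:ℝ)..x, |x - y| = ∫ y in (0:ℝ)..x, (x + (-1) * y + 0 * y ^ 2) := by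
    apply intervalIntegral.integral_congr
    intro y hy
    beta_reduce
    rw [Set.uIcc_of_le hx0] at hy
    rw [abs_of_nonneg (by linarith [hy.2] : (0:ℝ) ≤ x - y)]
    ring
  have e2 : ∫ y in x..(1:ℝ), |x - y| = ∫ y in x..(1:ℝ), ((-x) + 1 * y + 0 * y ^ 2) := by
    apply intervalIntegral.integral_congr
    intro y hy
    beta_reduce
    rw [Set.uIcc_of_le hx1] at hy
    rw [abs_of_nonpos (by linarith [hy.1] : x - y ≤ 0)]
    ring
  rw [e1, e2, hub_int_poly, hub_int_poly]
  ring

lemma hub_B_inner (c : ℝ) (hc0 : 0 ≤ c) (hc1 : c ≤ 1) (x : ℝ) (hx0 : 0 ≤ x) (hx1 : x ≤ 1) :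
    ∫ y in (0:ℝ)..1, max (c - max x y) 0 = max ((c ^ 2 - x ^ 2) / 2) 0 := by
  have hcont : Continuous fun y : ℝ => max (c - max x y) 0 := by fun_prop
  rcases le_total x c with hxc | hxc
  · -- x ≤ c
    rw [← intervalIntegral.integral_add_adjacent_intervals (a := (0:ℝ)) (b := x) (c := 1)
        (hcont.intervalIntegrable _ _) (hcont.intervalIntegrable _ _),
      ← intervalIntegral.integral_add_adjacent_intervals (a := x) (b := c) (c := 1)
        (hcont.intervalIntegrable _ _) (hcont.intervalIntegrable _ _)]
    have e1 : ∫ y in (0:ℝ)..x, max (c - max x y) 0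
        = ∫ y in (0:ℝ)..x, ((c - x) + 0 * y + 0 * y ^ 2) := by
      apply intervalIntegral.integral_congr
      intro y hy
      beta_reduce
      rw [Set.uIcc_of_le hx0] at hy
      rw [max_eq_left hy.2, max_eq_left (by linarith : (0:ℝ) ≤ c - x)]
      ring
    have e2 : ∫ y in x..c, max (c - max x y) 0
        = ∫ y in x..c, (c + (-1) * y + 0 * y ^ 2) := by
      apply intervalIntegral.integral_congr
      intro y hy
      beta_reduce
      rw [Set.uIcc_of_le hxc] at hy
      rw [max_eq_right hy.1, max_eq_left (by linarith [hy.2] : (0:ℝ) ≤ c - y)]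
      ring
    have e3 : ∫ y in c..(1:ℝ), max (c - max x y) 0
        = ∫ y in c..(1:ℝ), ((0:ℝ) + 0 * y + 0 * y ^ 2) := by
      apply intervalIntegral.integral_congr
      intro y hy
      beta_reduce
      rw [Set.uIcc_of_le hc1] at hy
      rw [max_eq_right (by linarith [hy.1] : x ≤ y),
        max_eq_right (by linarith [hy.1] : c - y ≤ 0)]
      ring
    rw [e1, e2, e3, hub_int_poly, hub_int_poly, hub_int_poly,
      max_eq_left (by nlinarith : (0:ℝ) ≤ (c ^ 2 - x ^ 2) / 2)]
    ring
  · -- c ≤ x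
    have e1 : ∫ y in (0:ℝ)..1, max (c - max x y) 0
        = ∫ y in (0:ℝ)..1, ((0:ℝ) + 0 * y + 0 * y ^ 2) := by
      apply intervalIntegral.integral_congr
      intro y hy
      beta_reduce
      rw [max_eq_right (by linarith [le_max_left x y] : c - max x y ≤ 0)]
      ring
    rw [e1, hub_int_poly, max_eq_right (by nlinarith : (c ^ 2 - x ^ 2) / 2 ≤ 0)]
    ring

lemma hub_C_inner (c : ℝ) (hc0 : 0 ≤ c) (hc1 : c ≤ 1) (x : ℝ) (hx0 : 0 ≤ x) (hx1 : x ≤ 1) :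
    ∫ y in (0:ℝ)..1, max (min x y - c) 0 = max ((x - c) * (2 - x - c) / 2) 0 := by
  have hcont : Continuous fun y : ℝ => max (min x y - c) 0 := by fun_prop
  rcases le_total c x with hxc | hxc
  · -- c ≤ x
    rw [← intervalIntegral.integral_add_adjacent_intervals (a := (0:ℝ)) (b := c) (c := 1)
        (hcont.intervalIntegrable _ _) (hcont.intervalIntegrable _ _),
      ← intervalIntegral.integral_add_adjacent_intervals (a := c) (b := x) (c := 1)
        (hcont.intervalIntegrable _ _) (hcont.intervalIntegrable _ _)]
    have e1 : ∫ y in (0:ℝ)..c, max (min x y - c) 0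
        = ∫ y in (0:ℝ)..c, ((0:ℝ) + 0 * y + 0 * y ^ 2) := by
      apply intervalIntegral.integral_congr
      intro y hy
      beta_reduce
      rw [Set.uIcc_of_le hc0] at hy
      rw [min_eq_right (by linarith [hy.2] : y ≤ x),
        max_eq_right (by linarith [hy.2] : y - c ≤ 0)]
      ring
    have e2 : ∫ y in c..x, max (min x y - c) 0
        = ∫ y in c..x, ((-c) + 1 * y + 0 * y ^ 2) := by
      apply intervalIntegral.integral_congr
      intro y hy
      beta_reduce
      rw [Set.uIcc_of_le hxc] at hy
      rw [min_eq_right hy.2, max_eq_left (by linarith [hy.1] : (0:ℝ) ≤ y - c)]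
      ring
    have e3 : ∫ y in x..(1:ℝ), max (min x y - c) 0
        = ∫ y in x..(1:ℝ), ((x - c) + 0 * y + 0 * y ^ 2) := by
      apply intervalIntegral.integral_congr
      intro y hy
      beta_reduce
      rw [Set.uIcc_of_le hx1] at hy
      rw [min_eq_left hy.1, max_eq_left (by linarith : (0:ℝ) ≤ x - c)]
      ring
    rw [e1, e2, e3, hub_int_poly, hub_int_poly, hub_int_poly,
      max_eq_left (by nlinarith : (0:ℝ) ≤ (x - c) * (2 - x - c) / 2)]
    ring
  · -- x ≤ c
    have e1 : ∫ y in (0:ℝ)..1, max (min x y - c) 0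
        = ∫ y in (0:ℝ)..1, ((0:ℝ) + 0 * y + 0 * y ^ 2) := by
      apply intervalIntegral.integral_congr
      intro y hy
      beta_reduce
      rw [max_eq_right (by linarith [min_le_left x y] : min x y - c ≤ 0)]
      ring
    rw [e1, hub_int_poly, max_eq_right (by nlinarith : (x - c) * (2 - x - c) / 2 ≤ 0)]
    ring

private lemma hub_psi₁ (L c : ℝ) (hL : 0 ≤ L) (hLc : L ≤ c) :
    ∫ t in (0:ℝ)..L, min t c = L ^ 2 / 2 := by
  have e1 : ∫ t in (0:ℝ)..L, min t c = ∫ t in (0:ℝ)..L, ((0:ℝ) + 1 * t + 0 * t ^ 2) := by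
    apply intervalIntegral.integral_congr
    intro t ht
    beta_reduce
    rw [Set.uIcc_of_le hL] at ht
    rw [min_eq_left (by linarith [ht.2] : t ≤ c)]
    ring
  rw [e1, hub_int_poly]; ring

private lemma hub_psi₂ (L c : ℝ) (hL : 0 ≤ L) (hLc : L ≤ c) :
    ∫ t in (0:ℝ)..c, min t L = L * c - L ^ 2 / 2 := by
  have hcont : Continuous fun t : ℝ => min t L := by fun_prop
  rw [← intervalIntegral.integral_add_adjacent_intervals (a := (0:ℝ)) (b := L) (c := c)
      (hcont.intervalIntegrable _ _) (hcont.intervalIntegrable _ _)]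
  have e1 : ∫ t in (0:ℝ)..L, min t L = ∫ t in (0:ℝ)..L, ((0:ℝ) + 1 * t + 0 * t ^ 2) := by
    apply intervalIntegral.integral_congr
    intro t ht
    beta_reduce
    rw [Set.uIcc_of_le hL] at ht
    rw [min_eq_left ht.2]
    ring
  have e2 : ∫ t in L..c, min t L = ∫ t in L..c, (L + 0 * t + 0 * t ^ 2) := by
    apply intervalIntegral.integral_congr
    intro t ht
    beta_reduce
    rw [Set.uIcc_of_le hLc] at ht
    rw [min_eq_right ht.1]
    ring
  rw [e1, e2, hub_int_poly, hub_int_poly]; ring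

lemma hub_two_sum (L c : ℝ) (hL : 0 ≤ L) (hc : 0 ≤ c) :
    (∫ t in (0:ℝ)..L, min t c) + (∫ t in (0:ℝ)..c, min t L) = L * c := by
  rcases le_total L c with h | h
  · rw [hub_psi₁ L c hL h, hub_psi₂ L c hL h]; ring
  · rw [hub_psi₁ c L hc h, hub_psi₂ c L hc h]; ring

lemma hub_D_inner (u v : ℝ) (hu : 0 ≤ u) (huv : u ≤ v) (hv : v ≤ 1)
    (x : ℝ) (hx0 : 0 ≤ x) (hx1 : x ≤ 1) :
    ∫ y in (0:ℝ)..1, min (max (min x y - u) 0) (max (v - max x y) 0)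
      = max ((x - u) * (v - x)) 0 := by
  have hcont : Continuous fun y : ℝ =>
      min (max (min x y - u) 0) (max (v - max x y) 0) := by fun_prop
  rcases le_total x u with hxu | hxu
  · -- x left of the gap: everything vanishes
    have e1 : ∫ y in (0:ℝ)..1, min (max (min x y - u) 0) (max (v - max x y) 0)
        = ∫ y in (0:ℝ)..1, ((0:ℝ) + 0 * y + 0 * y ^ 2) := by
      apply intervalIntegral.integral_congr
      intro y hy
      beta_reduce
      rw [max_eq_right (by linarith [min_le_left x y] : min x y - u ≤ 0),
        min_eq_left (le_max_right _ 0)]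
      ring
    rw [e1, hub_int_poly, max_eq_right (by nlinarith : (x - u) * (v - x) ≤ 0)]
    ring
  rcases le_total v x with hvx | hvx
  · -- x right of the gap: everything vanishes
    have e1 : ∫ y in (0:ℝ)..1, min (max (min x y - u) 0) (max (v - max x y) 0)
        = ∫ y in (0:ℝ)..1, ((0:ℝ) + 0 * y + 0 * y ^ 2) := by
      apply intervalIntegral.integral_congr
      intro y hy
      beta_reduce
      rw [max_eq_right (by linarith [le_max_left x y] : v - max x y ≤ 0),
        min_eq_right (le_max_right _ 0)]
      ring
    rw [e1, hub_int_poly, max_eq_right (by nlinarith : (x - u) * (v - x) ≤ 0)]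
    ring
  · -- u ≤ x ≤ v
    rw [← intervalIntegral.integral_add_adjacent_intervals (a := (0:ℝ)) (b := u) (c := 1)
        (hcont.intervalIntegrable _ _) (hcont.intervalIntegrable _ _),
      ← intervalIntegral.integral_add_adjacent_intervals (a := u) (b := x) (c := 1)
        (hcont.intervalIntegrable _ _) (hcont.intervalIntegrable _ _),
      ← intervalIntegral.integral_add_adjacent_intervals (a := x) (b := v) (c := 1)
        (hcont.intervalIntegrable _ _) (hcont.intervalIntegrable _ _)]
    have e1 : ∫ y in (0:ℝ)..u, min (max (min x y - u) 0) (max (v - max x y) 0)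
        = ∫ y in (0:ℝ)..u, ((0:ℝ) + 0 * y + 0 * y ^ 2) := by
      apply intervalIntegral.integral_congr
      intro y hy
      beta_reduce
      rw [Set.uIcc_of_le hu] at hy
      rw [min_eq_right (by linarith [hy.2] : y ≤ x),
        max_eq_right (by linarith [hy.2] : y - u ≤ 0),
        min_eq_left (le_max_right _ 0)]
      ring
    have e2 : ∫ y in u..x, min (max (min x y - u) 0) (max (v - max x y) 0)
        = ∫ y in u..x, min (y - u) (v - x) := by
      apply intervalIntegral.integral_congr
      intro y hy
      beta_reduce
      rw [Set.uIcc_of_le hxu] at hy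
      rw [min_eq_right hy.2, max_eq_left (by linarith [hy.1] : (0:ℝ) ≤ y - u),
        max_eq_left hy.2, max_eq_left (by linarith : (0:ℝ) ≤ v - x)]
    have e3 : ∫ y in x..v, min (max (min x y - u) 0) (max (v - max x y) 0)
        = ∫ y in x..v, min (x - u) (v - y) := by
      apply intervalIntegral.integral_congr
      intro y hy
      beta_reduce
      rw [Set.uIcc_of_le hvx] at hy
      rw [min_eq_left hy.1, max_eq_left (by linarith : (0:ℝ) ≤ x - u),
        max_eq_right hy.1, max_eq_left (by linarith [hy.2] : (0:ℝ) ≤ v - y)]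
    have e4 : ∫ y in v..(1:ℝ), min (max (min x y - u) 0) (max (v - max x y) 0)
        = ∫ y in v..(1:ℝ), ((0:ℝ) + 0 * y + 0 * y ^ 2) := by
      apply intervalIntegral.integral_congr
      intro y hy
      beta_reduce
      rw [Set.uIcc_of_le hv] at hy
      rw [max_eq_right (by linarith [hy.1] : x ≤ y),
        max_eq_right (by linarith [hy.1] : v - y ≤ 0),
        min_eq_right (le_max_right _ 0)]
      ring
    have s2 : ∫ y in u..x, min (y - u) (v - x)
        = ∫ t in (0:ℝ)..(x - u), min t (v - x) := by
      have := intervalIntegral.integral_comp_sub_right (a := u) (b := x)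
        (fun t => min t (v - x)) u
      simpa using this
    have s3 : ∫ y in x..v, min (x - u) (v - y)
        = ∫ t in (0:ℝ)..(v - x), min t (x - u) := by
      have := intervalIntegral.integral_comp_sub_left (a := x) (b := v)
        (fun t => min (x - u) t) v
      simp only [sub_self] at this
      rw [this]
      apply intervalIntegral.integral_congr
      intro t ht
      beta_reduce
      rw [min_comm]
    rw [e1, e2, e3, e4, s2, s3, hub_int_poly, hub_int_poly,
      max_eq_left (by nlinarith : (0:ℝ) ≤ (x - u) * (v - x))]
    have hts := hub_two_sum (x - u) (v - x) (by linarith) (by linarith)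
    linarith

lemma hub_A_outer : ∫ x in (0:ℝ)..1, (x ^ 2 - x + 1 / 2) = 1 / 3 := by
  have e1 : ∫ x in (0:ℝ)..1, (x ^ 2 - x + 1 / 2)
      = ∫ x in (0:ℝ)..1, ((1/2 : ℝ) + (-1) * x + 1 * x ^ 2) := by
    apply intervalIntegral.integral_congr
    intro x _
    beta_reduce
    ring
  rw [e1, hub_int_poly]; ring

lemma hub_B_outer (c : ℝ) (hc0 : 0 ≤ c) (hc1 : c ≤ 1) :
    ∫ x in (0:ℝ)..1, max ((c ^ 2 - x ^ 2) / 2) 0 = c ^ 3 / 3 := by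
  have hcont : Continuous fun x : ℝ => max ((c ^ 2 - x ^ 2) / 2) 0 := by fun_prop
  rw [← intervalIntegral.integral_add_adjacent_intervals (a := (0:ℝ)) (b := c) (c := 1)
      (hcont.intervalIntegrable _ _) (hcont.intervalIntegrable _ _)]
  have e1 : ∫ x in (0:ℝ)..c, max ((c ^ 2 - x ^ 2) / 2) 0
      = ∫ x in (0:ℝ)..c, (c ^ 2 / 2 + 0 * x + (-(1/2)) * x ^ 2) := by
    apply intervalIntegral.integral_congr
    intro x hx
    beta_reduce
    rw [Set.uIcc_of_le hc0] at hx
    rw [max_eq_left (by nlinarith [hx.1, hx.2] : (0:ℝ) ≤ (c ^ 2 - x ^ 2) / 2)]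
    ring
  have e2 : ∫ x in c..(1:ℝ), max ((c ^ 2 - x ^ 2) / 2) 0
      = ∫ x in c..(1:ℝ), ((0:ℝ) + 0 * x + 0 * x ^ 2) := by
    apply intervalIntegral.integral_congr
    intro x hx
    beta_reduce
    rw [Set.uIcc_of_le hc1] at hx
    rw [max_eq_right (by nlinarith [hx.1] : (c ^ 2 - x ^ 2) / 2 ≤ 0)]
    ring
  rw [e1, e2, hub_int_poly, hub_int_poly]; ring

lemma hub_C_outer (c : ℝ) (hc0 : 0 ≤ c) (hc1 : c ≤ 1) :
    ∫ x in (0:ℝ)..1, max ((x - c) * (2 - x - c) / 2) 0 = (1 - c) ^ 3 / 3 := by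
  have hcont : Continuous fun x : ℝ => max ((x - c) * (2 - x - c) / 2) 0 := by fun_prop
  rw [← intervalIntegral.integral_add_adjacent_intervals (a := (0:ℝ)) (b := c) (c := 1)
      (hcont.intervalIntegrable _ _) (hcont.intervalIntegrable _ _)]
  have e1 : ∫ x in (0:ℝ)..c, max ((x - c) * (2 - x - c) / 2) 0
      = ∫ x in (0:ℝ)..c, ((0:ℝ) + 0 * x + 0 * x ^ 2) := by
    apply intervalIntegral.integral_congr
    intro x hx
    beta_reduce
    rw [Set.uIcc_of_le hc0] at hx
    rw [max_eq_right (by nlinarith [hx.2] : (x - c) * (2 - x - c) / 2 ≤ 0)]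
    ring
  have e2 : ∫ x in c..(1:ℝ), max ((x - c) * (2 - x - c) / 2) 0
      = ∫ x in c..(1:ℝ), ((c ^ 2 / 2 - c) + 1 * x + (-(1/2)) * x ^ 2) := by
    apply intervalIntegral.integral_congr
    intro x hx
    beta_reduce
    rw [Set.uIcc_of_le hc1] at hx
    rw [max_eq_left (by nlinarith [hx.1, hx.2] : (0:ℝ) ≤ (x - c) * (2 - x - c) / 2)]
    ring
  rw [e1, e2, hub_int_poly, hub_int_poly]; ring

lemma hub_D_outer (u v : ℝ) (hu : 0 ≤ u) (huv : u ≤ v) (hv : v ≤ 1) :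
    ∫ x in (0:ℝ)..1, max ((x - u) * (v - x)) 0 = (v - u) ^ 3 / 6 := by
  have hcont : Continuous fun x : ℝ => max ((x - u) * (v - x)) 0 := by fun_prop
  rw [← intervalIntegral.integral_add_adjacent_intervals (a := (0:ℝ)) (b := u) (c := 1)
      (hcont.intervalIntegrable _ _) (hcont.intervalIntegrable _ _),
    ← intervalIntegral.integral_add_adjacent_intervals (a := u) (b := v) (c := 1)
      (hcont.intervalIntegrable _ _) (hcont.intervalIntegrable _ _)]
  have e1 : ∫ x in (0:ℝ)..u, max ((x - u) * (v - x)) 0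
      = ∫ x in (0:ℝ)..u, ((0:ℝ) + 0 * x + 0 * x ^ 2) := by
    apply intervalIntegral.integral_congr
    intro x hx
    beta_reduce
    rw [Set.uIcc_of_le hu] at hx
    rw [max_eq_right (by nlinarith [hx.2] : (x - u) * (v - x) ≤ 0)]
    ring
  have e2 : ∫ x in u..v, max ((x - u) * (v - x)) 0
      = ∫ x in u..v, ((-(u * v)) + (u + v) * x + (-1) * x ^ 2) := by
    apply intervalIntegral.integral_congr
    intro x hx
    beta_reduce
    rw [Set.uIcc_of_le huv] at hx
    rw [max_eq_left (by nlinarith [hx.1, hx.2] : (0:ℝ) ≤ (x - u) * (v - x))]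
    ring
  have e3 : ∫ x in v..(1:ℝ), max ((x - u) * (v - x)) 0
      = ∫ x in v..(1:ℝ), ((0:ℝ) + 0 * x + 0 * x ^ 2) := by
    apply intervalIntegral.integral_congr
    intro x hx
    beta_reduce
    rw [Set.uIcc_of_le hv] at hx
    rw [max_eq_right (by nlinarith [hx.1] : (x - u) * (v - x) ≤ 0)]
    ring
  rw [e1, e2, e3, hub_int_poly, hub_int_poly, hub_int_poly]; ring

/-- Closed form for the hub objective. -/
lemma hub_formula (n : ℕ) (hn : 1 ≤ n) (p : ℕ → ℝ)
    (h0 : 0 ≤ p 1) (hm : ∀ i j, 1 ≤ i → i ≤ j → j ≤ n → p i ≤ p j) (h1 : p n ≤ 1)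
    (H : (Finset.Icc 1 n).Nonempty) :
    (∫ x in (0:ℝ)..1, ∫ y in (0:ℝ)..1,
        (Finset.Icc 1 n).inf' H (fun i => |x - p i| + |y - p i|))
      = 1 / 3 + 2 / 3 * (p 1) ^ 3 + 2 / 3 * (1 - p n) ^ 3
        + 1 / 3 * ∑ k ∈ Finset.Icc 1 (n - 1), (p (k + 1) - p k) ^ 3 := by
  have h1n : p 1 ≤ p n := hm 1 n le_rfl hn le_rfl
  have hbd : ∀ k ∈ Finset.Icc 1 (n - 1), 0 ≤ p k ∧ p k ≤ p (k + 1) ∧ p (k + 1) ≤ 1 := by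
    intro k hk
    rw [Finset.mem_Icc] at hk
    have hk1 : 1 ≤ k := hk.1
    have hk2 : k + 1 ≤ n := by omega
    exact ⟨le_trans h0 (hm 1 k le_rfl hk1 (by omega)),
      hm k (k + 1) hk1 (by omega) hk2,
      le_trans (hm (k + 1) n (by omega) hk2 le_rfl) h1⟩
  have hEq : Set.EqOn
      (fun x => ∫ y in (0:ℝ)..1,
        (Finset.Icc 1 n).inf' H (fun i => |x - p i| + |y - p i|))
      (fun x => (x ^ 2 - x + 1 / 2) + 2 * (max (((p 1) ^ 2 - x ^ 2) / 2) 0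
        + max ((x - p n) * (2 - x - p n) / 2) 0
        + ∑ k ∈ Finset.Icc 1 (n - 1), max ((x - p k) * (p (k + 1) - x)) 0))
      (Set.uIcc 0 1) := by
    intro x hx
    rw [Set.uIcc_of_le zero_le_one] at hx
    beta_reduce
    have hrw : ∀ y : ℝ, (Finset.Icc 1 n).inf' H (fun i => |x - p i| + |y - p i|)
        = |x - y| + 2 * (max (p 1 - max x y) 0 + max (min x y - p n) 0
          + ∑ k ∈ Finset.Icc 1 (n - 1),
              min (max (min x y - p k) 0) (max (p (k + 1) - max x y) 0)) :=
      fun y => hub_point n hn p hm H x y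
    simp only [hrw]
    have iA : IntervalIntegrable (fun y : ℝ => |x - y|) volume 0 1 :=
      (by fun_prop : Continuous fun y : ℝ => |x - y|).intervalIntegrable _ _
    have iB : IntervalIntegrable (fun y : ℝ => max (p 1 - max x y) 0) volume 0 1 :=
      (by fun_prop : Continuous fun y : ℝ => max (p 1 - max x y) 0).intervalIntegrable _ _
    have iC : IntervalIntegrable (fun y : ℝ => max (min x y - p n) 0) volume 0 1 :=
      (by fun_prop : Continuous fun y : ℝ => max (min x y - p n) 0).intervalIntegrable _ _
    have iS : IntervalIntegrable (fun y : ℝ => ∑ k ∈ Finset.Icc 1 (n - 1),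
        min (max (min x y - p k) 0) (max (p (k + 1) - max x y) 0)) volume 0 1 :=
      (by fun_prop : Continuous fun y : ℝ => ∑ k ∈ Finset.Icc 1 (n - 1),
        min (max (min x y - p k) 0) (max (p (k + 1) - max x y) 0)).intervalIntegrable _ _
    have iMul : IntervalIntegrable (fun y : ℝ =>
        2 * (max (p 1 - max x y) 0 + max (min x y - p n) 0
          + ∑ k ∈ Finset.Icc 1 (n - 1),
              min (max (min x y - p k) 0) (max (p (k + 1) - max x y) 0))) volume 0 1 := by
      apply Continuous.intervalIntegrable
      fun_prop
    rw [intervalIntegral.integral_add iA iMul, intervalIntegral.integral_const_mul,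
      intervalIntegral.integral_add (iB.add iC) iS, intervalIntegral.integral_add iB iC,
      intervalIntegral.integral_finset_sum (fun k _ =>
        (by fun_prop : Continuous fun y : ℝ =>
          min (max (min x y - p k) 0) (max (p (k + 1) - max x y) 0)).intervalIntegrable 0 1),
      hub_A_inner x hx.1 hx.2, hub_B_inner (p 1) h0 (le_trans h1n h1) x hx.1 hx.2,
      hub_C_inner (p n) (le_trans h0 h1n) h1 x hx.1 hx.2,
      Finset.sum_congr rfl (fun k hk => hub_D_inner (p k) (p (k + 1))
        (hbd k hk).1 (hbd k hk).2.1 (hbd k hk).2.2 x hx.1 hx.2)]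
  rw [intervalIntegral.integral_congr hEq]
  have oA : IntervalIntegrable (fun x : ℝ => x ^ 2 - x + 1 / 2) volume 0 1 :=
    (by fun_prop : Continuous fun x : ℝ => x ^ 2 - x + 1 / 2).intervalIntegrable _ _
  have oB : IntervalIntegrable (fun x : ℝ => max (((p 1) ^ 2 - x ^ 2) / 2) 0) volume 0 1 :=
    (by fun_prop : Continuous fun x : ℝ =>
      max (((p 1) ^ 2 - x ^ 2) / 2) 0).intervalIntegrable _ _
  have oC : IntervalIntegrable
      (fun x : ℝ => max ((x - p n) * (2 - x - p n) / 2) 0) volume 0 1 :=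
    (by fun_prop : Continuous fun x : ℝ =>
      max ((x - p n) * (2 - x - p n) / 2) 0).intervalIntegrable _ _
  have oS : IntervalIntegrable (fun x : ℝ => ∑ k ∈ Finset.Icc 1 (n - 1),
      max ((x - p k) * (p (k + 1) - x)) 0) volume 0 1 :=
    (by fun_prop : Continuous fun x : ℝ => ∑ k ∈ Finset.Icc 1 (n - 1),
      max ((x - p k) * (p (k + 1) - x)) 0).intervalIntegrable _ _
  have oMul : IntervalIntegrable (fun x : ℝ =>
      2 * (max (((p 1) ^ 2 - x ^ 2) / 2) 0 + max ((x - p n) * (2 - x - p n) / 2) 0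
        + ∑ k ∈ Finset.Icc 1 (n - 1), max ((x - p k) * (p (k + 1) - x)) 0))
      volume 0 1 := by
    apply Continuous.intervalIntegrable
    fun_prop
  rw [intervalIntegral.integral_add oA oMul, intervalIntegral.integral_const_mul,
    intervalIntegral.integral_add (oB.add oC) oS, intervalIntegral.integral_add oB oC,
    intervalIntegral.integral_finset_sum (fun k _ =>
      (by fun_prop : Continuous fun x : ℝ =>
        max ((x - p k) * (p (k + 1) - x)) 0).intervalIntegrable 0 1),
    hub_A_outer, hub_B_outer (p 1) h0 (le_trans h1n h1),
    hub_C_outer (p n) (le_trans h0 h1n) h1,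
    Finset.sum_congr rfl (fun k hk => hub_D_outer (p k) (p (k + 1))
      (hbd k hk).1 (hbd k hk).2.1 (hbd k hk).2.2)]
  rw [show (∑ k ∈ Finset.Icc 1 (n - 1), (p (k + 1) - p k) ^ 3 / 6)
      = (∑ k ∈ Finset.Icc 1 (n - 1), (p (k + 1) - p k) ^ 3) / 6 from
    (Finset.sum_div _ _ _).symm]
  ring

lemma hub_tele (q : ℕ → ℝ) : ∀ n : ℕ, 1 ≤ n →
    ∑ k ∈ Finset.Icc 1 (n - 1), (q (k + 1) - q k) = q n - q 1 := by
  intro n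
  induction n with
  | zero => omega
  | succ m ih =>
    intro _
    rcases Nat.eq_zero_or_pos m with hm | hm
    · subst hm
      rw [show (0 + 1 - 1 : ℕ) = 0 from rfl, Finset.Icc_eq_empty (by omega),
        Finset.sum_empty]
      ring
    · have hins : Finset.Icc 1 m = insert m (Finset.Icc 1 (m - 1)) := by
        ext j
        simp only [Finset.mem_Icc, Finset.mem_insert]
        omega
      rw [show m + 1 - 1 = m from rfl, hins,
        Finset.sum_insert (by simp only [Finset.mem_Icc]; omega), ih hm]
      ring

lemma hub_card (n : ℕ) (hn : 1 ≤ n) :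
    ((Finset.Icc 1 (n - 1)).card : ℝ) = (n : ℝ) - 1 := by
  rw [Nat.card_Icc]
  have h : n - 1 + 1 - 1 = n - 1 := by omega
  rw [h, Nat.cast_sub hn, Nat.cast_one]

lemma hub_tangent (t w : ℝ) (ht : 0 ≤ t) (hw : 0 ≤ w) :
    3 * w ^ 2 * t - 2 * w ^ 3 ≤ t ^ 3 := by
  nlinarith [mul_nonneg (sq_nonneg (t - w)) (by linarith : (0:ℝ) ≤ t + 2 * w)]

theorem stmt_12 (n : ℕ) (hn : 1 ≤ n) (pstar : ℕ → ℝ)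
    (hpstar : ∀ i, pstar i
      = (((i : ℝ) - 1) * Real.sqrt 2 + 1) / (((n : ℝ) - 1) * Real.sqrt 2 + 2)) :
    (0 ≤ pstar 1 ∧ (∀ i j, 1 ≤ i → i ≤ j → j ≤ n → pstar i ≤ pstar j) ∧ pstar n ≤ 1)
    ∧ ∀ q : ℕ → ℝ, 0 ≤ q 1 → (∀ i j, 1 ≤ i → i ≤ j → j ≤ n → q i ≤ q j) → q n ≤ 1 →
        (∫ x in (0:ℝ)..1, ∫ y in (0:ℝ)..1,
            (Finset.Icc 1 n).inf' (Finset.nonempty_Icc.mpr hn)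
              (fun i => |x - pstar i| + |y - pstar i|))
          ≤ ∫ x in (0:ℝ)..1, ∫ y in (0:ℝ)..1,
              (Finset.Icc 1 n).inf' (Finset.nonempty_Icc.mpr hn)
                (fun i => |x - q i| + |y - q i|) := by
  set s : ℝ := Real.sqrt 2 with hs_def
  have hs : 0 < s := Real.sqrt_pos.mpr (by norm_num)
  have hs2 : s ^ 2 = 2 := Real.sq_sqrt (by norm_num)
  have hn1 : (1:ℝ) ≤ (n:ℝ) := by exact_mod_cast hn
  set d : ℝ := ((n : ℝ) - 1) * s + 2 with hd_def
  have hd : 0 < d := by nlinarith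
  set a : ℝ := 1 / d with ha_def
  set c : ℝ := s * a with hc_def
  have ha : 0 < a := by positivity
  have hc : 0 < c := by positivity
  have hc2 : c ^ 2 = 2 * a ^ 2 := by
    rw [hc_def, mul_pow, hs2]
  have hsum1 : 2 * a + ((n:ℝ) - 1) * c = 1 := by
    rw [hc_def, ha_def]
    field_simp
    rw [hd_def]
    ring
  have hp1 : pstar 1 = a := by
    rw [hpstar 1, ha_def]
    norm_num
  have hpn : 1 - pstar n = a := by
    rw [hpstar n, ha_def]
    field_simp
    rw [hd_def]
    ring
  have hgap : ∀ k : ℕ, pstar (k + 1) - pstar k = c := by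
    intro k
    rw [hpstar (k + 1), hpstar k, div_sub_div_same, hc_def, ha_def, mul_one_div]
    congr 1
    push_cast
    ring
  have h0 : 0 ≤ pstar 1 := by rw [hp1]; exact ha.le
  have h1 : pstar n ≤ 1 := by linarith
  have hmono : ∀ i j, 1 ≤ i → i ≤ j → j ≤ n → pstar i ≤ pstar j := by
    intro i j _ hij _
    rw [hpstar i, hpstar j, div_le_div_iff₀ hd hd]
    have hcast : (i:ℝ) ≤ (j:ℝ) := by exact_mod_cast hij
    nlinarith [mul_nonneg (mul_nonneg (sub_nonneg.mpr hcast) hs.le) hd.le]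
  refine ⟨⟨h0, hmono, h1⟩, ?_⟩
  intro q hq0 hqm hq1
  rw [hub_formula n hn pstar h0 hmono h1 _, hub_formula n hn q hq0 hqm hq1 _]
  have hPs : ∑ k ∈ Finset.Icc 1 (n - 1), (pstar (k + 1) - pstar k) ^ 3
      = ((n:ℝ) - 1) * c ^ 3 := by
    rw [Finset.sum_congr rfl (fun k _ => by rw [hgap k]), Finset.sum_const,
      nsmul_eq_mul, hub_card n hn]
  have T1 := hub_tangent (q 1) a hq0 ha.le
  have T2 := hub_tangent (1 - q n) a (by linarith) ha.le
  have hS : 3 * (2 * a ^ 2) * (q n - q 1) - ((n:ℝ) - 1) * (2 * c ^ 3)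
      ≤ ∑ k ∈ Finset.Icc 1 (n - 1), (q (k + 1) - q k) ^ 3 := by
    have hb : ∀ k ∈ Finset.Icc 1 (n - 1),
        3 * (2 * a ^ 2) * (q (k + 1) - q k) - 2 * c ^ 3 ≤ (q (k + 1) - q k) ^ 3 := by
      intro k hk
      rw [Finset.mem_Icc] at hk
      have hg : 0 ≤ q (k + 1) - q k := by
        have := hqm k (k + 1) hk.1 (by omega) (by omega)
        linarith
      have ht := hub_tangent (q (k + 1) - q k) c hg hc.le
      rw [hc2] at ht
      linarith
    calc 3 * (2 * a ^ 2) * (q n - q 1) - ((n:ℝ) - 1) * (2 * c ^ 3)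
        = ∑ k ∈ Finset.Icc 1 (n - 1),
            (3 * (2 * a ^ 2) * (q (k + 1) - q k) - 2 * c ^ 3) := by
          rw [Finset.sum_sub_distrib, ← Finset.mul_sum, hub_tele q n hn,
            Finset.sum_const, nsmul_eq_mul, hub_card n hn]
      _ ≤ _ := Finset.sum_le_sum hb
  have h3 : c ^ 3 = 2 * a ^ 2 * c := by
    calc c ^ 3 = c ^ 2 * c := by ring
      _ = 2 * a ^ 2 * c := by rw [hc2]
  have hkey : 2 * a ^ 2 = 4 * a ^ 3 + ((n:ℝ) - 1) * c ^ 3 := by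
    linear_combination (-(2 * a ^ 2)) * hsum1 - ((n:ℝ) - 1) * h3
  rw [hp1, hpn, hPs]
  linarith [T1, T2, hS, hkey]
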